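/- Let A, B ∈ ℝ^{n×n}, b ∈ ℝⁿ, θ ∈ [0,1), and let Ω ∈ ℝ^{n×n} be such that Ω + A is invertible. Suppose F(x*) = 0 and ‖(Ω+A)^{-1}‖ < 1/[2‖B‖ + ‖Ω−A‖ + θ(‖Ω+A‖ + 2‖B‖ + ‖Ω−A‖)]. Then any sequence {x^k} in ℝⁿ satisfying the inexact new modified Newton condition ‖((Ω+A)/2)x^{k+1} − [((Ω−A)/2)x^k + B|x^k| + b]‖ ≤ θ‖F(x^k)‖ for all k ≥ 0 converges linearly to x* from any starting point x^0. -/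

import Mathlib

open Matrix Filter

/-- Componentwise absolute value of a vector in Euclidean space. -/
noncomputable def vabs {n : ℕ} (x : EuclideanSpace ℝ (Fin n)) : EuclideanSpace ℝ (Fin n) :=
  WithLp.toLp 2 (fun i => |x i|)

/-- A matrix acting on Euclidean space (so that vector norms are the Euclidean 2-norm). -/
noncomputable def mulV {n : ℕ} (M : Matrix (Fin n) (Fin n) ℝ) (x : EuclideanSpace ℝ (Fin n)) :
    EuclideanSpace ℝ (Fin n) :=
  Matrix.toEuclideanCLM (𝕜 := ℝ) M x

/-- Spectral norm of a real matrix: the operator norm induced by the Euclidean vector norm. -/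
noncomputable def spec {n : ℕ} (M : Matrix (Fin n) (Fin n) ℝ) : ℝ :=
  ‖Matrix.toEuclideanCLM (𝕜 := ℝ) M‖

/-- The GAVE residual function `F(x) = A x − B |x| − b`. -/
noncomputable def gaveF {n : ℕ} (A B : Matrix (Fin n) (Fin n) ℝ)
    (b : EuclideanSpace ℝ (Fin n)) (x : EuclideanSpace ℝ (Fin n)) : EuclideanSpace ℝ (Fin n) :=
  mulV A x - mulV B (vabs x) - b

/-- The AVE residual function `A x − |x| − b` (the GAVE with `B = I`). -/
noncomputable def aveF {n : ℕ} (A : Matrix (Fin n) (Fin n) ℝ)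
    (b : EuclideanSpace ℝ (Fin n)) (x : EuclideanSpace ℝ (Fin n)) : EuclideanSpace ℝ (Fin n) :=
  mulV A x - vabs x - b

/-- A sequence converges linearly to `xs`: the distances to `xs` contract by a fixed
factor `c < 1` at every step, and the sequence tends to `xs`. -/
def ConvergesLinearlyTo {n : ℕ} (x : ℕ → EuclideanSpace ℝ (Fin n))
    (xs : EuclideanSpace ℝ (Fin n)) : Prop :=
  (∃ c : ℝ, 0 ≤ c ∧ c < 1 ∧ ∀ k : ℕ, ‖x (k + 1) - xs‖ ≤ c * ‖x k - xs‖) ∧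
    Tendsto x atTop (nhds xs)


private lemma mulV_sub' {n : ℕ} (M : Matrix (Fin n) (Fin n) ℝ) (x y : EuclideanSpace ℝ (Fin n)) :
    mulV M (x - y) = mulV M x - mulV M y := by simp [mulV]

private lemma mulV_smul' {n : ℕ} (c : ℝ) (M : Matrix (Fin n) (Fin n) ℝ)
    (x : EuclideanSpace ℝ (Fin n)) : mulV (c • M) x = c • mulV M x := by simp [mulV]

private lemma mulV_mul' {n : ℕ} (M N : Matrix (Fin n) (Fin n) ℝ)
    (x : EuclideanSpace ℝ (Fin n)) : mulV (M * N) x = mulV M (mulV N x) := by simp [mulV]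

private lemma mulV_one' {n : ℕ} (x : EuclideanSpace ℝ (Fin n)) : mulV 1 x = x := by simp [mulV]

private lemma norm_mulV_le' {n : ℕ} (M : Matrix (Fin n) (Fin n) ℝ)
    (x : EuclideanSpace ℝ (Fin n)) : ‖mulV M x‖ ≤ spec M * ‖x‖ :=
  (Matrix.toEuclideanCLM (𝕜 := ℝ) M).le_opNorm x

private lemma vabs_lip' {n : ℕ} (x y : EuclideanSpace ℝ (Fin n)) :
    ‖vabs x - vabs y‖ ≤ ‖x - y‖ := by
  rw [EuclideanSpace.norm_eq, EuclideanSpace.norm_eq]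
  apply Real.sqrt_le_sqrt
  apply Finset.sum_le_sum
  intro i _
  simp only [vabs, PiLp.sub_apply, PiLp.toLp_apply, Pi.sub_apply, Real.norm_eq_abs]
  exact pow_le_pow_left₀ (abs_nonneg _) (abs_abs_sub_abs_le_abs_sub _ _) 2

theorem stmt6 {n : ℕ} (A B Ω : Matrix (Fin n) (Fin n) ℝ)
    (b : EuclideanSpace ℝ (Fin n)) (θ : ℝ) (hθ0 : 0 ≤ θ) (hθ1 : θ < 1)
    (hinv : IsUnit (Ω + A))
    (xs : EuclideanSpace ℝ (Fin n)) (hxs : gaveF A B b xs = 0)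
    (hcond : spec (Ω + A)⁻¹ <
      1 / (2 * spec B + spec (Ω - A) + θ * (spec (Ω + A) + 2 * spec B + spec (Ω - A))))
    (x : ℕ → EuclideanSpace ℝ (Fin n))
    (hx : ∀ k : ℕ, ‖mulV ((2 : ℝ)⁻¹ • (Ω + A)) (x (k + 1)) -
        (mulV ((2 : ℝ)⁻¹ • (Ω - A)) (x k) + mulV B (vabs (x k)) + b)‖ ≤
      θ * ‖gaveF A B b (x k)‖) :
    ConvergesLinearlyTo x xs := by
  set D : ℝ := 2 * spec B + spec (Ω - A) + θ * (spec (Ω + A) + 2 * spec B + spec (Ω - A)) with hD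
  have hspec0 : 0 ≤ spec (Ω + A)⁻¹ := norm_nonneg _
  have hDpos : 0 < D := by
    by_contra h
    push_neg at h
    have h1 : 1 / D ≤ 0 := one_div_nonpos.mpr h
    linarith
  set c : ℝ := spec (Ω + A)⁻¹ * D with hc
  have hc1 : c < 1 := by
    have := (lt_div_iff₀ hDpos).mp hcond
    linarith
  have hc0 : 0 ≤ c := mul_nonneg hspec0 hDpos.le
  have hdet : IsUnit (Ω + A).det := (Matrix.isUnit_iff_isUnit_det _).mp hinv
  have hinvmul : (Ω + A)⁻¹ * (Ω + A) = 1 := Matrix.nonsing_inv_mul _ hdet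
  have hfix : mulV A xs = mulV B (vabs xs) + b := by
    have h0 : mulV A xs - mulV B (vabs xs) - b = 0 := hxs
    have : mulV A xs - (mulV B (vabs xs) + b) = 0 := by rw [← sub_sub]; exact h0
    exact sub_eq_zero.mp this
  have hmat2 : (Ω + A) - (Ω - A) = (2 : ℝ) • A := by module
  have haux : mulV (Ω + A) xs = mulV (Ω - A) xs + (2 : ℝ) • (mulV B (vabs xs) + b) := by
    have h1 : mulV (Ω + A) xs - mulV (Ω - A) xs = (2 : ℝ) • mulV A xs := by
      rw [← mulV_smul', ← hmat2]
      simp [mulV]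
    rw [← hfix, ← h1]
    abel
  have key : ∀ k, ‖x (k + 1) - xs‖ ≤ c * ‖x k - xs‖ := by
    intro k
    set e1 := x (k + 1) - xs with he1
    set e := x k - xs with he
    set d := vabs (x k) - vabs xs with hd
    have hdn : ‖d‖ ≤ ‖e‖ := vabs_lip' _ _
    have hAe : mulV A e = (2 : ℝ)⁻¹ • (mulV (Ω + A) e - mulV (Ω - A) e) := by
      have : mulV (Ω + A) e - mulV (Ω - A) e = (2 : ℝ) • mulV A e := by
        rw [← mulV_smul', ← hmat2]
        simp [mulV]
      rw [this]
      module
    have hAen : ‖mulV A e‖ ≤ (2 : ℝ)⁻¹ * (spec (Ω + A) + spec (Ω - A)) * ‖e‖ := by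
      rw [hAe, norm_smul]
      have h1 : ‖mulV (Ω + A) e - mulV (Ω - A) e‖ ≤ (spec (Ω + A) + spec (Ω - A)) * ‖e‖ := by
        calc ‖mulV (Ω + A) e - mulV (Ω - A) e‖ ≤ ‖mulV (Ω + A) e‖ + ‖mulV (Ω - A) e‖ :=
              norm_sub_le _ _
          _ ≤ spec (Ω + A) * ‖e‖ + spec (Ω - A) * ‖e‖ :=
              add_le_add (norm_mulV_le' _ _) (norm_mulV_le' _ _)
          _ = (spec (Ω + A) + spec (Ω - A)) * ‖e‖ := by ring
      calc ‖(2 : ℝ)⁻¹‖ * ‖mulV (Ω + A) e - mulV (Ω - A) e‖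
          = (2 : ℝ)⁻¹ * ‖mulV (Ω + A) e - mulV (Ω - A) e‖ := by norm_num
        _ ≤ (2 : ℝ)⁻¹ * ((spec (Ω + A) + spec (Ω - A)) * ‖e‖) := by
            apply mul_le_mul_of_nonneg_left h1; norm_num
        _ = (2 : ℝ)⁻¹ * (spec (Ω + A) + spec (Ω - A)) * ‖e‖ := by ring
    have hFeq : gaveF A B b (x k) = mulV A e - mulV B d := by
      rw [he, hd, mulV_sub', mulV_sub', hfix]
      unfold gaveF
      abel
    have hBd : ‖mulV B d‖ ≤ spec B * ‖e‖ := by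
      calc ‖mulV B d‖ ≤ spec B * ‖d‖ := norm_mulV_le' _ _
        _ ≤ spec B * ‖e‖ := mul_le_mul_of_nonneg_left hdn (norm_nonneg _)
    have hFle : ‖gaveF A B b (x k)‖ ≤
        ((2 : ℝ)⁻¹ * (spec (Ω + A) + spec (Ω - A)) + spec B) * ‖e‖ := by
      rw [hFeq]
      calc ‖mulV A e - mulV B d‖ ≤ ‖mulV A e‖ + ‖mulV B d‖ := norm_sub_le _ _
        _ ≤ (2 : ℝ)⁻¹ * (spec (Ω + A) + spec (Ω - A)) * ‖e‖ + spec B * ‖e‖ :=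
            add_le_add hAen hBd
        _ = ((2 : ℝ)⁻¹ * (spec (Ω + A) + spec (Ω - A)) + spec B) * ‖e‖ := by ring
    set r := mulV ((2 : ℝ)⁻¹ • (Ω + A)) (x (k + 1)) -
        (mulV ((2 : ℝ)⁻¹ • (Ω - A)) (x k) + mulV B (vabs (x k)) + b) with hr
    have hiter : mulV (Ω + A) e1 = (2 : ℝ) • r + mulV (Ω - A) e + (2 : ℝ) • mulV B d := by
      rw [hr, he1, he, hd, mulV_sub', mulV_sub', mulV_sub', mulV_smul', mulV_smul', haux]
      module
    have hrn : ‖r‖ ≤ θ * ‖gaveF A B b (x k)‖ := hx k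
    have h1 : ‖mulV (Ω + A) e1‖ ≤ D * ‖e‖ := by
      have t1 : ‖mulV (Ω + A) e1‖ ≤ 2 * ‖r‖ + spec (Ω - A) * ‖e‖ + 2 * (spec B * ‖e‖) := by
        rw [hiter]
        calc ‖(2 : ℝ) • r + mulV (Ω - A) e + (2 : ℝ) • mulV B d‖
            ≤ ‖(2 : ℝ) • r‖ + ‖mulV (Ω - A) e‖ + ‖(2 : ℝ) • mulV B d‖ :=
              norm_add₃_le
          _ = 2 * ‖r‖ + ‖mulV (Ω - A) e‖ + 2 * ‖mulV B d‖ := by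
              rw [norm_smul, norm_smul]; norm_num
          _ ≤ 2 * ‖r‖ + spec (Ω - A) * ‖e‖ + 2 * (spec B * ‖e‖) := by
              have := norm_mulV_le' (Ω - A) e
              linarith [hBd]
      have t2 : θ * ‖gaveF A B b (x k)‖ ≤
          θ * (((2 : ℝ)⁻¹ * (spec (Ω + A) + spec (Ω - A)) + spec B) * ‖e‖) :=
        mul_le_mul_of_nonneg_left hFle hθ0
      have t3 : ‖r‖ ≤ θ * (((2 : ℝ)⁻¹ * (spec (Ω + A) + spec (Ω - A)) + spec B) * ‖e‖) :=
        le_trans hrn t2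
      rw [hD]
      nlinarith [norm_nonneg e, norm_nonneg r]
    have h2 : e1 = mulV (Ω + A)⁻¹ (mulV (Ω + A) e1) := by
      rw [← mulV_mul', hinvmul, mulV_one']
    calc ‖e1‖ = ‖mulV (Ω + A)⁻¹ (mulV (Ω + A) e1)‖ := by rw [← h2]
      _ ≤ spec (Ω + A)⁻¹ * ‖mulV (Ω + A) e1‖ := norm_mulV_le' _ _
      _ ≤ spec (Ω + A)⁻¹ * (D * ‖e‖) := mul_le_mul_of_nonneg_left h1 hspec0
      _ = c * ‖e‖ := by rw [hc]; ring
  refine ⟨⟨c, hc0, hc1, key⟩, ?_⟩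
  have hnorm : ∀ k, ‖x k - xs‖ ≤ c ^ k * ‖x 0 - xs‖ := by
    intro k
    induction k with
    | zero => simp
    | succ k ih =>
      calc ‖x (k + 1) - xs‖ ≤ c * ‖x k - xs‖ := key k
        _ ≤ c * (c ^ k * ‖x 0 - xs‖) := mul_le_mul_of_nonneg_left ih hc0
        _ = c ^ (k + 1) * ‖x 0 - xs‖ := by ring
  have hgeo : Tendsto (fun k => c ^ k * ‖x 0 - xs‖) atTop (nhds 0) := by
    simpa using (tendsto_pow_atTop_nhds_zero_of_lt_one hc0 hc1).mul_const ‖x 0 - xs‖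
  rw [tendsto_iff_norm_sub_tendsto_zero]
  exact squeeze_zero (fun k => norm_nonneg _) hnorm hgeo
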